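/- Let d : Λ → ℝ be concave and differentiable on convex Λ, with maximizer λ*. Let the Bregman proximal point sequence be defined by λ_{k+1} = argmax over Λ of {d(λ) - (1/η_k)·D_h(λ, λ_k)} with η_k > 0. Then for all λ ∈ Λ and all k: η_k·(d(λ) - d(λ_{k+1})) ≤ D_h(λ, λ_k) - D_h(λ, λ_{k+1}) - D_h(λ_{k+1}, λ_k). -/

import Mathlib

open RealInnerProductSpace

lemma concave_grad_ineq {n : ℕ} (Λ : Set (EuclideanSpace ℝ (Fin n)))
    (d : EuclideanSpace ℝ (Fin n) → ℝ)
    (d' : EuclideanSpace ℝ (Fin n) → EuclideanSpace ℝ (Fin n))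
    (hdconc : ConcaveOn ℝ Λ d)
    (hddiff : ∀ x, HasGradientAt d (d' x) x)
    {x y : EuclideanSpace ℝ (Fin n)} (hx : x ∈ Λ) (hy : y ∈ Λ) :
    d y - d x ≤ ⟪d' x, y - x⟫ := by
  set g : ℝ → ℝ := fun t => d (x + t • (y - x)) with hg
  have hline : HasDerivAt (fun t : ℝ => x + t • (y - x)) (y - x) 0 := by
    simpa using ((hasDerivAt_id (0 : ℝ)).smul_const (y - x)).const_add x
  have hfd : HasFDerivAt d (InnerProductSpace.toDual ℝ _ (d' x)) x :=
    (hasGradientAt_iff_hasFDerivAt.mp (hddiff x))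
  have hfd' : HasFDerivAt d (InnerProductSpace.toDual ℝ _ (d' x)) (x + (0:ℝ) • (y - x)) := by
    simpa using hfd
  have hgd : HasDerivAt g ⟪d' x, y - x⟫ 0 := by
    have := hfd'.comp_hasDerivAt (0 : ℝ) hline
    simpa [InnerProductSpace.toDual_apply_apply, hg, Function.comp_def] using this
  have hslope := hasDerivAt_iff_tendsto_slope.mp hgd
  have hslope' : Filter.Tendsto (slope g 0) (nhdsWithin 0 (Set.Ioi 0))
      (nhds ⟪d' x, y - x⟫) :=
    hslope.mono_left (nhdsWithin_mono _ (fun t ht => by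
      simp only [Set.mem_compl_iff, Set.mem_singleton_iff]
      exact ne_of_gt ht))
  have hev : ∀ᶠ t in nhdsWithin (0:ℝ) (Set.Ioi 0), g 1 - g 0 ≤ slope g 0 t := by
    filter_upwards [Ioc_mem_nhdsGT_of_mem (by norm_num : (0:ℝ) ∈ Set.Ico (0:ℝ) 1)]
      with t ht
    have ht0 : (0:ℝ) < t := ht.1
    have ht1 : t ≤ 1 := ht.2
    have hcomb := hdconc.2 hx hy (show (0:ℝ) ≤ 1 - t by linarith) ht0.le (by ring)
    have heq : (1 - t) • x + t • y = x + t • (y - x) := by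
      module
    rw [heq] at hcomb
    have hg0 : g 0 = d x := by simp [hg]
    have hg1 : g 1 = d y := by simp [hg]
    rw [slope_def_field, hg0, hg1, sub_zero, le_div_iff₀ ht0]
    have hc : (1 - t) * d x + t * d y ≤ g t := by
      simpa [hg, smul_eq_mul] using hcomb
    nlinarith
  have hle : g 1 - g 0 ≤ ⟪d' x, y - x⟫ :=
    ge_of_tendsto hslope' hev
  have hg0 : g 0 = d x := by simp [hg]
  have hg1 : g 1 = d y := by simp [hg]
  rw [hg0, hg1] at hle
  exact hle

theorem bregman_ppm_one_step {n : ℕ}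
    (Λ : Set (EuclideanSpace ℝ (Fin n))) (hΛ : Convex ℝ Λ)
    (h : EuclideanSpace ℝ (Fin n) → ℝ)
    (h' : EuclideanSpace ℝ (Fin n) → EuclideanSpace ℝ (Fin n))
    (hstrict : StrictConvexOn ℝ Λ h)
    (hdiff : ∀ x, HasGradientAt h (h' x) x)
    (D : EuclideanSpace ℝ (Fin n) → EuclideanSpace ℝ (Fin n) → ℝ)
    (hD : ∀ x y, D x y = h x - h y - ⟪h' y, x - y⟫)
    (d : EuclideanSpace ℝ (Fin n) → ℝ)
    (d' : EuclideanSpace ℝ (Fin n) → EuclideanSpace ℝ (Fin n))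
    (hdconc : ConcaveOn ℝ Λ d)
    (hddiff : ∀ x, HasGradientAt d (d' x) x)
    (η : ℕ → ℝ) (hη : ∀ k, 0 < η k)
    (lam : ℕ → EuclideanSpace ℝ (Fin n)) (hmem : ∀ k, lam k ∈ Λ)
    (hopt : ∀ k, ∀ μ ∈ Λ,
      ⟪d' (lam (k + 1)) - (1 / η k) • (h' (lam (k + 1)) - h' (lam k)), μ - lam (k + 1)⟫ ≤ 0) :
    ∀ μ ∈ Λ, ∀ k,
      η k * (d μ - d (lam (k + 1))) ≤ D μ (lam k) - D μ (lam (k + 1)) - D (lam (k + 1)) (lam k) := by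
  intro μ hμ k
  have hgrad : d μ - d (lam (k + 1)) ≤ ⟪d' (lam (k + 1)), μ - lam (k + 1)⟫ :=
    concave_grad_ineq Λ d d' hdconc hddiff (hmem (k + 1)) hμ
  have hoptk := hopt k μ hμ
  rw [inner_sub_left, real_inner_smul_left] at hoptk
  have hηk := hη k
  -- three point identity
  have h3 : D μ (lam k) - D μ (lam (k + 1)) - D (lam (k + 1)) (lam k)
      = ⟪h' (lam (k + 1)) - h' (lam k), μ - lam (k + 1)⟫ := by
    rw [hD, hD, hD, inner_sub_left]
    have e1 : ⟪h' (lam k), μ - lam k⟫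
        = ⟪h' (lam k), μ - lam (k+1)⟫ + ⟪h' (lam k), lam (k+1) - lam k⟫ := by
      rw [← inner_add_right]; congr 1; abel
    rw [e1]; ring
  rw [h3]
  set A : ℝ := ⟪h' (lam (k + 1)) - h' (lam k), μ - lam (k + 1)⟫ with hA
  set B : ℝ := ⟪d' (lam (k + 1)), μ - lam (k + 1)⟫ with hB
  have hineq : η k * B ≤ A := by
    have h1 := mul_le_mul_of_nonneg_left hoptk (le_of_lt hηk)
    have h2 : η k * (1 / η k * A) = A := by field_simp
    nlinarith
  calc η k * (d μ - d (lam (k + 1)))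
      ≤ η k * ⟪d' (lam (k + 1)), μ - lam (k + 1)⟫ :=
        mul_le_mul_of_nonneg_left hgrad (le_of_lt hηk)
    _ ≤ _ := hineq
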